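/- The relation ≤ on S_n defined by: π ≤ σ iff every cycle of π is contained in a cycle of σ and, for each cycle C of σ, the restriction of π to C is non-crossing with respect to the cyclic order of C, is a partial order (reflexive, antisymmetric, transitive) on S_n. -/

import Mathlib

open Equiv

namespace ThirdOrderFree

variable {α : Type*}

/-- The setoid whose classes are the cycles (orbits) of a permutation. -/
def sameCycleSetoid (σ : Perm α) : Setoid α :=
  ⟨σ.SameCycle,
    ⟨fun x => Equiv.Perm.SameCycle.refl σ x, fun h => h.symm, fun h h' => h.trans h'⟩⟩

/-- Number of cycles (orbits, including fixed points) of a permutation. -/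
noncomputable def numCycles (σ : Perm α) : ℕ :=
  Nat.card (Quotient (sameCycleSetoid σ))

/-- The length `|σ| = n - #(σ)`. -/
noncomputable def len (σ : Perm α) : ℕ :=
  Nat.card α - numCycles σ

/-- Join of the cycle partitions of two permutations. -/
def joinSetoid (π σ : Perm α) : Setoid α :=
  sameCycleSetoid π ⊔ sameCycleSetoid σ

/-- Number of blocks of `π ∨ σ`. -/
noncomputable def numBlocks (π σ : Perm α) : ℕ :=
  Nat.card (Quotient (joinSetoid π σ))

/-- `π ∨ σ` is the one-block partition. -/
def JoinTop (π σ : Perm α) : Prop :=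
  ∀ x y : α, (joinSetoid π σ).r x y

/-- `π` is a non-crossing (annular) permutation with respect to `γ`. -/
def SNC (γ π : Perm α) : Prop :=
  JoinTop π γ ∧
    numCycles π + numCycles (π⁻¹ * γ) + numCycles γ = Nat.card α + 2

/-- `τ` separates the points of `N`: no cycle of `τ` contains two distinct points of `N`. -/
def Separates (τ : Perm α) (N : Set α) : Prop :=
  ∀ x ∈ N, ∀ y ∈ N, τ.SameCycle x y → x = y

/-- The first-return map of `σ` on the set `{x | p x}`. -/
noncomputable def firstReturn (σ : Perm α) (p : α → Prop) (x : α) : α :=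
  (σ ^ sInf {k : ℕ | 0 < k ∧ p ((σ ^ k) x)}) x

open Classical in
/-- The restriction of `σ` to `{x | p x}`: the unique permutation agreeing with the
first-return map (it exists whenever `α` is finite). -/
noncomputable def restrictPerm (σ : Perm α) (p : α → Prop) : Perm {x // p x} :=
  if h : ∃ e : Perm {x // p x}, ∀ x : {x // p x}, (e x : α) = firstReturn σ p (x : α)
  then h.choose else 1

/-- `π ≤ σ` : each cycle of `π` is contained in a cycle of `σ` and on each cycle of
`σ` the restriction of `π` is a non-crossing permutation of that cycle. -/
def le' (π σ : Perm α) : Prop :=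
  (∀ x y : α, π.SameCycle x y → σ.SameCycle x y) ∧
  ∀ x : α,
    numCycles (restrictPerm π (σ.SameCycle x)) +
      numCycles ((restrictPerm π (σ.SameCycle x))⁻¹ * restrictPerm σ (σ.SameCycle x)) =
      Nat.card {y // σ.SameCycle x y} + 1

/-- `π ≲ σ` : on each block of `π ∨ σ`, `π` is annular non-crossing w.r.t. `σ`. -/
def ncRel (π σ : Perm α) : Prop :=
  ∀ x : α,
    SNC (restrictPerm σ ((joinSetoid π σ).r x)) (restrictPerm π ((joinSetoid π σ).r x))

/-- The permutation of `Σ i, Fin (n i)` rotating each block: the product of the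
directed cycles `T i` of lengths `n i`. -/
def blockRotate {ι : Type*} (n : ι → ℕ) : Perm ((i : ι) × Fin (n i)) :=
  Equiv.sigmaCongrRight fun i => finRotate (n i)

/-- The first elements of the blocks. -/
def zeroSection {ι : Type*} (n : ι → ℕ) (hn : ∀ i, 0 < n i) :
    ι ≃ {x : (i : ι) × Fin (n i) // x.2.val = 0} where
  toFun i := ⟨⟨i, ⟨0, hn i⟩⟩, rfl⟩
  invFun x := x.1.1
  left_inv i := rfl
  right_inv := fun x => by
    obtain ⟨⟨i, j⟩, hj⟩ := x
    exact Subtype.ext (congrArg (Sigma.mk i) (Fin.ext hj.symm))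

/-- `π_{\vec n}` : merge the blocks `T i` along the cycles of `π`; within a block it
moves forward, and the last element of block `i` is sent to the first element of
block `π i`. -/
def mergePerm {ι : Type*} (n : ι → ℕ) (hn : ∀ i, 0 < n i) (π : Perm ι) :
    Perm ((i : ι) × Fin (n i)) :=
  (π.extendDomain (zeroSection n hn)) * blockRotate n


/-! ### Generic counting lemmas for quotients -/

theorem card_quotient_le_card [Finite α] (s : Setoid α) :
    Nat.card (Quotient s) ≤ Nat.card α :=
  Nat.card_le_card_of_surjective (Quotient.mk s)
    (fun q => Quotient.inductionOn q fun a => ⟨a, rfl⟩)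

theorem card_quotient_le_of_le [Finite α] {s t : Setoid α}
    (h : ∀ x y, s.r x y → t.r x y) :
    Nat.card (Quotient t) ≤ Nat.card (Quotient s) :=
  Nat.card_le_card_of_surjective
    (Quotient.lift (Quotient.mk t) (fun a b hab => Quotient.sound (h a b hab)))
    (fun q => Quotient.inductionOn q fun a => ⟨Quotient.mk s a, rfl⟩)

/-- The join of a setoid with the pair `{a, b}`. -/
def pairJoin (r : Setoid α) (a b : α) : Setoid α where
  r x y := r.r x y ∨ (r.r x a ∧ r.r b y) ∨ (r.r x b ∧ r.r a y)
  iseqv := by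
    constructor
    · exact fun x => Or.inl (r.refl x)
    · rintro x y (h | ⟨h1, h2⟩ | ⟨h1, h2⟩)
      · exact Or.inl (r.symm h)
      · exact Or.inr (Or.inr ⟨r.symm h2, r.symm h1⟩)
      · exact Or.inr (Or.inl ⟨r.symm h2, r.symm h1⟩)
    · rintro x y z (h | ⟨h1, h2⟩ | ⟨h1, h2⟩) (h' | ⟨h1', h2'⟩ | ⟨h1', h2'⟩)
      · exact Or.inl (r.trans h h')
      · exact Or.inr (Or.inl ⟨r.trans h h1', h2'⟩)
      · exact Or.inr (Or.inr ⟨r.trans h h1', h2'⟩)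
      · exact Or.inr (Or.inl ⟨h1, r.trans h2 h'⟩)
      · exact Or.inl (r.trans h1 (r.trans (r.symm (r.trans h2 h1')) h2'))
      · exact Or.inl (r.trans h1 h2')
      · exact Or.inr (Or.inr ⟨h1, r.trans h2 h'⟩)
      · exact Or.inl (r.trans h1 h2')
      · exact Or.inl (r.trans h1 (r.trans (r.symm (r.trans h2 h1')) h2'))

theorem card_quotient_le_card_quotient_pairJoin_add_one [Finite α] (r : Setoid α) (a b : α) :
    Nat.card (Quotient r) ≤ Nat.card (Quotient (pairJoin r a b)) + 1 := by
  classical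
  set s := pairJoin r a b with hs
  have hrs : ∀ x y, r.r x y → s.r x y := fun x y h => Or.inl h
  let g : Quotient r → Quotient s :=
    Quotient.lift (Quotient.mk s) (fun u v huv => Quotient.sound (hrs u v huv))
  let f : Quotient r → Quotient s ⊕ Unit := fun c =>
    if c = Quotient.mk r a then Sum.inr () else Sum.inl (g c)
  have hinj : Function.Injective f := by
    intro c d hcd
    induction c using Quotient.inductionOn with | _ x =>
    induction d using Quotient.inductionOn with | _ y =>
    by_cases hx : Quotient.mk r x = Quotient.mk r a <;>
        by_cases hy : Quotient.mk r y = Quotient.mk r a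
    · exact hx.trans hy.symm
    · simp only [f, if_pos hx, if_neg hy] at hcd
      exact absurd hcd (by simp)
    · simp only [f, if_neg hx, if_pos hy] at hcd
      exact absurd hcd (by simp)
    · simp only [f, if_neg hx, if_neg hy, Sum.inl.injEq] at hcd
      have hxy : s.r x y := Quotient.exact hcd
      rcases hxy with h | ⟨h1, h2⟩ | ⟨h1, h2⟩
      · exact Quotient.sound h
      · exact absurd (Quotient.sound h1) hx
      · exact absurd (Quotient.sound (r.symm h2)) hy
  calc Nat.card (Quotient r) ≤ Nat.card (Quotient s ⊕ Unit) :=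
        Nat.card_le_card_of_injective f hinj
    _ = Nat.card (Quotient s) + 1 := by simp [Nat.card_sum]

/-! ### SameCycle closure lemma -/

theorem sameCycle_le {g : Perm α} {r : α → α → Prop} (hr : Equivalence r)
    (hstep : ∀ z, r z (g z)) {x y : α} (h : g.SameCycle x y) : r x y := by
  obtain ⟨k, rfl⟩ := h
  induction k using Int.induction_on with
  | zero => simpa using hr.refl x
  | succ k ih =>
      have hk : (g ^ ((k : ℤ) + 1)) x = g ((g ^ (k : ℤ)) x) := by
        rw [add_comm, zpow_add, zpow_one, Perm.mul_apply]
      rw [hk]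
      exact hr.trans ih (hstep _)
  | pred k ih =>
      have hk : (g ^ (-(k : ℤ) - 1)) x = g⁻¹ ((g ^ (-(k : ℤ))) x) := by
        rw [sub_eq_add_neg, add_comm, zpow_add, zpow_neg, zpow_one, Perm.mul_apply]
      rw [hk]
      refine hr.trans ih (hr.symm ?_)
      have := hstep (g⁻¹ ((g ^ (-(k : ℤ))) x))
      rwa [show g (g⁻¹ ((g ^ (-(k : ℤ))) x)) = (g ^ (-(k : ℤ))) x from g.apply_symm_apply _] at this



/-! ### numCycles basics -/

theorem numCycles_def (σ : Perm α) :
    numCycles σ = Nat.card (Quotient (sameCycleSetoid σ)) := rfl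

theorem numCycles_le_card [Finite α] (σ : Perm α) : numCycles σ ≤ Nat.card α :=
  card_quotient_le_card _

theorem numCycles_one [Finite α] : numCycles (1 : Perm α) = Nat.card α :=
  (Nat.card_eq_of_bijective (Quotient.mk (sameCycleSetoid (1 : Perm α)))
    ⟨fun x y hxy => Perm.sameCycle_one.mp (Quotient.exact hxy),
     fun q => Quotient.inductionOn q fun a => ⟨a, rfl⟩⟩).symm

theorem numCycles_eq_one_of_forall [Finite α] [Nonempty α] {σ : Perm α}
    (h : ∀ x y, σ.SameCycle x y) : numCycles σ = 1 := by
  rw [numCycles_def, Nat.card_eq_one_iff_unique]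
  cases nonempty_fintype α
  refine ⟨⟨fun c d => ?_⟩, ⟨Quotient.mk _ (Classical.arbitrary α)⟩⟩
  induction c using Quotient.inductionOn with | _ x =>
  induction d using Quotient.inductionOn with | _ y =>
  exact Quotient.sound (h x y)

theorem eq_one_of_numCycles_eq_card [Finite α] {σ : Perm α}
    (h : numCycles σ = Nat.card α) : σ = 1 := by
  classical
  cases nonempty_fintype α
  have hsurj : Function.Surjective (Quotient.mk (sameCycleSetoid σ)) :=
    fun q => Quotient.inductionOn q fun a => ⟨a, rfl⟩
  have hbij : Function.Bijective (Quotient.mk (sameCycleSetoid σ)) := by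
    rw [Fintype.bijective_iff_surjective_and_card]
    refine ⟨hsurj, ?_⟩
    have := h
    rw [numCycles_def] at this
    rw [← Nat.card_eq_fintype_card, ← Nat.card_eq_fintype_card, this]
  ext x
  have : σ.SameCycle x (σ x) := ⟨1, by simp⟩
  have := hbij.1 (Quotient.sound this : Quotient.mk (sameCycleSetoid σ) x = _)
  simp [this.symm]

/-! ### swap surgery -/

theorem numCycles_swap_mul_le [Finite α] [DecidableEq α] (σ : Perm α) (a b : α) :
    numCycles (swap a b * σ) ≤ numCycles σ + 1 := by
  set τ := swap a b * σ with hτ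
  -- sameCycleSetoid σ ≤ pairJoin (sameCycleSetoid τ) a b
  have hle : ∀ x y, (sameCycleSetoid σ).r x y → (pairJoin (sameCycleSetoid τ) a b).r x y := by
    intro x y hxy
    refine sameCycle_le (pairJoin (sameCycleSetoid τ) a b).iseqv (fun z => ?_) hxy
    by_cases h1 : σ z = a
    · have hb : τ z = b := by simp [hτ, Perm.mul_apply, h1]
      refine Or.inr (Or.inr ⟨⟨(1 : ℤ), by rw [zpow_one, hb]⟩, ?_⟩)
      rw [h1]
    · by_cases h2 : σ z = b
      · have ha : τ z = a := by simp [hτ, Perm.mul_apply, h2]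
        refine Or.inr (Or.inl ⟨⟨(1 : ℤ), by rw [zpow_one, ha]⟩, ?_⟩)
        rw [h2]
      · have hz : τ z = σ z := by
          simp [hτ, Perm.mul_apply, swap_apply_of_ne_of_ne h1 h2]
        exact Or.inl ⟨(1 : ℤ), by rw [zpow_one, hz]⟩
  have hA := card_quotient_le_card_quotient_pairJoin_add_one (sameCycleSetoid τ) a b
  have hB := card_quotient_le_of_le hle
  rw [numCycles_def, numCycles_def]
  omega

theorem le_numCycles_swap_mul_add_one [Finite α] [DecidableEq α] (σ : Perm α) (a b : α) :
    numCycles σ ≤ numCycles (swap a b * σ) + 1 := by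
  have := numCycles_swap_mul_le (swap a b * σ) a b
  rwa [← mul_assoc, swap_mul_self, one_mul] at this

theorem numCycles_swap_mul_eq [Finite α] [DecidableEq α] {σ : Perm α} {x : α}
    (hx : σ x ≠ x) : numCycles (swap x (σ x) * σ) = numCycles σ + 1 := by
  classical
  cases nonempty_fintype α
  set σ' := swap x (σ x) * σ with hσ'
  have hfix : σ' x = x := by simp [hσ', Perm.mul_apply]
  -- σ'-cycles refine σ-cycles
  have hle : ∀ u v, (sameCycleSetoid σ').r u v → (sameCycleSetoid σ).r u v := by
    intro u v huv
    refine sameCycle_le (sameCycleSetoid σ).iseqv (fun z => ?_) huv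
    by_cases h1 : σ z = x
    · have : σ' z = σ x := by simp [hσ', Perm.mul_apply, h1]
      rw [this]
      exact Perm.SameCycle.trans ⟨(1 : ℤ), by rw [zpow_one, h1]⟩ ⟨(1 : ℤ), by rw [zpow_one]⟩
    · by_cases h2 : σ z = σ x
      · have hzx : z = x := σ.injective h2
        rw [hzx, hfix]
      · have : σ' z = σ z := by
          simp [hσ', Perm.mul_apply, swap_apply_of_ne_of_ne h1 h2]
        rw [this]
        exact ⟨(1 : ℤ), by rw [zpow_one]⟩
  -- the induced surjection
  let f : Quotient (sameCycleSetoid σ') → Quotient (sameCycleSetoid σ) :=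
    Quotient.lift (Quotient.mk (sameCycleSetoid σ)) (fun u v huv => Quotient.sound (hle u v huv))
  have hfsurj : Function.Surjective f :=
    fun q => Quotient.inductionOn q fun a => ⟨Quotient.mk (sameCycleSetoid σ') a, rfl⟩
  -- upper bound
  have hup : numCycles σ' ≤ numCycles σ + 1 := numCycles_swap_mul_le σ x (σ x)
  -- lower bound
  have hlow : numCycles σ < numCycles σ' := by
    have hmono : numCycles σ ≤ numCycles σ' := card_quotient_le_of_le hle
    rcases lt_or_eq_of_le hmono with h | h
    · exact h
    exfalso
    have hbij : Function.Bijective f := by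
      rw [Fintype.bijective_iff_surjective_and_card]
      refine ⟨hfsurj, ?_⟩
      rw [← Nat.card_eq_fintype_card, ← Nat.card_eq_fintype_card]
      exact (congrArg id h).symm
    have hfx : f (Quotient.mk _ x) = f (Quotient.mk _ (σ x)) :=
      Quotient.sound (⟨(1 : ℤ), by rw [zpow_one]⟩ : σ.SameCycle x (σ x))
    have := hbij.1 hfx
    have hsc : σ'.SameCycle x (σ x) := Quotient.exact this
    obtain ⟨k, hk⟩ := hsc
    rw [Perm.zpow_apply_eq_self_of_apply_eq_self hfix k] at hk
    exact hx hk.symm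
  omega

theorem exists_swap_list [Finite α] [DecidableEq α] (σ : Perm α) :
    ∃ l : List (Perm α), (∀ τ ∈ l, ∃ a b : α, τ = swap a b) ∧ l.prod = σ ∧
      Nat.card α = numCycles σ + l.length := by
  classical
  suffices h : ∀ (k : ℕ) (σ : Perm α), Nat.card α ≤ numCycles σ + k →
      ∃ l : List (Perm α), (∀ τ ∈ l, ∃ a b : α, τ = swap a b) ∧ l.prod = σ ∧
        Nat.card α = numCycles σ + l.length by
    exact h (Nat.card α) σ (by have := numCycles_le_card σ; omega)
  intro k
  induction k with
  | zero =>
      intro σ hk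
      have h1 : numCycles σ = Nat.card α :=
        le_antisymm (numCycles_le_card σ) (by omega)
      refine ⟨[], by simp, by simp [eq_one_of_numCycles_eq_card h1], by simp [h1]⟩
  | succ k ih =>
      intro σ hk
      by_cases h1 : σ = 1
      · refine ⟨[], by simp, by simp [h1], by simp [h1, numCycles_one]⟩
      · obtain ⟨x, hx⟩ : ∃ x, σ x ≠ x := by
          by_contra h
          push_neg at h
          exact h1 (Equiv.ext h)
        set σ' := swap x (σ x) * σ with hσ'
        have hnc : numCycles σ' = numCycles σ + 1 := numCycles_swap_mul_eq hx
        obtain ⟨l, hl1, hl2, hl3⟩ := ih σ' (by omega)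
        refine ⟨swap x (σ x) :: l, ?_, ?_, ?_⟩
        · intro τ hτ
          rcases List.mem_cons.mp hτ with h | h
          · exact ⟨x, σ x, h⟩
          · exact hl1 τ h
        · rw [List.prod_cons, hl2, hσ', ← mul_assoc, swap_mul_self, one_mul]
        · simp only [List.length_cons]
          omega

theorem numCycles_add_numCycles_le [Finite α] (σ τ : Perm α) :
    numCycles σ + numCycles τ ≤ Nat.card α + numCycles (σ * τ) := by
  classical
  cases nonempty_fintype α
  obtain ⟨l, hl1, hl2, hl3⟩ := exists_swap_list σ
  have key : ∀ (l : List (Perm α)), (∀ e ∈ l, ∃ a b : α, e = swap a b) → ∀ ρ : Perm α,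
      numCycles ρ ≤ numCycles (l.prod * ρ) + l.length := by
    intro l
    induction l with
    | nil => intro _ ρ; simp
    | cons e l ih =>
        intro h ρ
        obtain ⟨a, b, rfl⟩ := h e (by simp)
        have h1 := ih (fun e he => h e (by simp [he])) ρ
        have h2 := le_numCycles_swap_mul_add_one (l.prod * ρ) a b
        rw [List.prod_cons, mul_assoc]
        simp only [List.length_cons]
        omega
  have := key l hl1 τ
  rw [hl2] at this
  omega

/-! ### restrictPerm on invariant sets -/

theorem firstReturn_eq_of_invariant (σ : Perm α) {p : α → Prop}
    (hp : ∀ y, p y ↔ p (σ y)) {x : α} (hx : p x) : firstReturn σ p x = σ x := by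
  have h1 : 1 ∈ {k : ℕ | 0 < k ∧ p ((σ ^ k) x)} := ⟨one_pos, by simpa using (hp x).1 hx⟩
  have h0 : sInf {k : ℕ | 0 < k ∧ p ((σ ^ k) x)} = 1 := by
    refine le_antisymm (Nat.sInf_le h1) ?_
    rcases Nat.eq_zero_or_pos (sInf {k : ℕ | 0 < k ∧ p ((σ ^ k) x)}) with h | h
    · exact absurd ((Nat.sInf_eq_zero.mp h).resolve_right
        (Set.nonempty_iff_ne_empty.mp ⟨1, h1⟩)).1 (lt_irrefl 0)
    · exact h
  rw [firstReturn, h0, pow_one]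

theorem restrictPerm_eq_subtypePerm [Finite α] (σ : Perm α) {p : α → Prop}
    (hp : ∀ y, p (σ y) ↔ p y) : restrictPerm σ p = σ.subtypePerm hp := by
  have hex : ∃ e : Perm {x // p x}, ∀ x : {x // p x}, (e x : α) = firstReturn σ p (x : α) :=
    ⟨σ.subtypePerm hp, fun x => (firstReturn_eq_of_invariant σ (fun y => (hp y).symm) x.2).symm⟩
  rw [restrictPerm, dif_pos hex]
  ext x
  rw [hex.choose_spec x, firstReturn_eq_of_invariant σ (fun y => (hp y).symm) x.2]
  rfl

/-! ### invariance lemmas -/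

theorem invariant_self (σ : Perm α) (x : α) :
    ∀ y, σ.SameCycle x (σ y) ↔ σ.SameCycle x y :=
  fun _ => Perm.sameCycle_apply_right

theorem invariant_of_refines {π σ : Perm α}
    (h : ∀ u v, π.SameCycle u v → σ.SameCycle u v) (x : α) :
    ∀ y, σ.SameCycle x (π y) ↔ σ.SameCycle x y := fun y =>
  ⟨fun hxy => hxy.trans (h (π y) y ⟨(-1 : ℤ), by simp⟩),
   fun hxy => hxy.trans (h y (π y) ⟨(1 : ℤ), by rw [zpow_one]⟩)⟩

theorem refines_inv_mul {π σ : Perm α}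
    (h : ∀ u v, π.SameCycle u v → σ.SameCycle u v) :
    ∀ u v, (π⁻¹ * σ).SameCycle u v → σ.SameCycle u v := by
  intro u v huv
  refine sameCycle_le (sameCycleSetoid σ).iseqv (fun z => ?_) huv
  have h1 : σ.SameCycle z (σ z) := ⟨(1 : ℤ), by rw [zpow_one]⟩
  have h2 : π.SameCycle (σ z) (π⁻¹ (σ z)) := ⟨(-1 : ℤ), by simp⟩
  exact h1.trans (h _ _ h2)

/-! ### decomposition over the cycles of ρ -/

theorem numCycles_eq_sum [Finite α] (ρ π : Perm α)
    (h : ∀ u v, π.SameCycle u v → ρ.SameCycle u v)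
    [Fintype (Quotient (sameCycleSetoid ρ))] :
    numCycles π = ∑ c : Quotient (sameCycleSetoid ρ),
      numCycles (π.subtypePerm (invariant_of_refines h (Quotient.out c))) := by
  classical
  let F : Quotient (sameCycleSetoid π) → Quotient (sameCycleSetoid ρ) :=
    Quotient.lift (Quotient.mk (sameCycleSetoid ρ)) (fun a b hab => Quotient.sound (h a b hab))
  have key : ∀ c : Quotient (sameCycleSetoid ρ),
      Nat.card {d : Quotient (sameCycleSetoid π) // F d = c} =
      numCycles (π.subtypePerm (invariant_of_refines h (Quotient.out c))) := by
    intro c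
    set π' := π.subtypePerm (invariant_of_refines h (Quotient.out c)) with hπ'
    let u : Quotient (sameCycleSetoid π') → {d : Quotient (sameCycleSetoid π) // F d = c} :=
      Quotient.lift
        (fun y : {z // ρ.SameCycle (Quotient.out c) z} =>
          (⟨Quotient.mk (sameCycleSetoid π) y.1,
            (Quotient.sound y.2.symm).trans (Quotient.out_eq c)⟩ :
            {d : Quotient (sameCycleSetoid π) // F d = c}))
        (fun y z hyz =>
          Subtype.ext (Quotient.sound (Perm.sameCycle_subtypePerm.mp hyz)))
    have hu : Function.Bijective u := by
      constructor
      · intro q r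
        induction q using Quotient.inductionOn with | _ y =>
        induction r using Quotient.inductionOn with | _ z =>
        intro huv
        have hyz : π.SameCycle y.1 z.1 := Quotient.exact (congrArg Subtype.val huv)
        exact Quotient.sound (Perm.sameCycle_subtypePerm.mpr hyz)
      · rintro ⟨d, hd⟩
        revert hd
        induction d using Quotient.inductionOn with | _ w =>
        intro hd
        have hw : ρ.SameCycle (Quotient.out c) w :=
          Quotient.exact ((Quotient.out_eq c).trans (hd : _ = c).symm)
        exact ⟨Quotient.mk _ (⟨w, hw⟩ : {z // ρ.SameCycle (Quotient.out c) z}),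
          Subtype.ext rfl⟩
    exact (Nat.card_eq_of_bijective u hu).symm
  letI : ∀ c : Quotient (sameCycleSetoid ρ),
      Fintype {d : Quotient (sameCycleSetoid π) // F d = c} := fun c => Fintype.ofFinite _
  calc numCycles π = Nat.card (Quotient (sameCycleSetoid π)) := rfl
    _ = Nat.card ((c : Quotient (sameCycleSetoid ρ)) ×
          {d : Quotient (sameCycleSetoid π) // F d = c}) :=
        (Nat.card_congr (Equiv.sigmaFiberEquiv F)).symm
    _ = ∑ c : Quotient (sameCycleSetoid ρ),
          Nat.card {d : Quotient (sameCycleSetoid π) // F d = c} := by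
        rw [Nat.card_eq_fintype_card, Fintype.card_sigma]
        exact Finset.sum_congr rfl fun c _ => Nat.card_eq_fintype_card.symm
    _ = _ := Finset.sum_congr rfl fun c _ => key c

theorem card_eq_sum [Finite α] (σ : Perm α)
    [Fintype (Quotient (sameCycleSetoid σ))] :
    Nat.card α = ∑ c : Quotient (sameCycleSetoid σ),
      Nat.card {y // σ.SameCycle (Quotient.out c) y} := by
  have h1 : ∀ u v : α, (1 : Perm α).SameCycle u v → σ.SameCycle u v := fun u v huv => by
    rw [Perm.sameCycle_one] at huv
    exact huv ▸ Perm.SameCycle.refl σ u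
  have key := numCycles_eq_sum σ 1 h1
  rw [numCycles_one] at key
  rw [key]
  refine Finset.sum_congr rfl fun c _ => ?_
  have hone : (1 : Perm α).subtypePerm (invariant_of_refines h1 (Quotient.out c)) = 1 :=
    Perm.subtypePerm_one _ _
  rw [hone, numCycles_one]

theorem numCycles_subtypePerm_sameCycle [Finite α] (σ : Perm α) (x : α)
    (hp : ∀ y, σ.SameCycle x (σ y) ↔ σ.SameCycle x y) :
    numCycles (σ.subtypePerm hp) = 1 := by
  haveI : Nonempty {y // σ.SameCycle x y} := ⟨⟨x, Perm.SameCycle.refl σ x⟩⟩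
  exact numCycles_eq_one_of_forall fun y z =>
    Perm.sameCycle_subtypePerm.mpr (y.2.symm.trans z.2)

theorem subtypePerm_congr {p : α → Prop} {f g : Perm α} (h : f = g)
    (hf : ∀ y, p (f y) ↔ p y) (hg : ∀ y, p (g y) ↔ p y) :
    f.subtypePerm hf = g.subtypePerm hg := by subst h; rfl

/-- The per-cycle non-crossing condition, as a predicate on the cycle `p`. -/
def cond (π σ : Perm α) (p : α → Prop) : Prop :=
  numCycles (restrictPerm π p) +
    numCycles ((restrictPerm π p)⁻¹ * restrictPerm σ p) = Nat.card {y // p y} + 1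

theorem global_iff [Finite α] {π σ : Perm α}
    (h : ∀ u v, π.SameCycle u v → σ.SameCycle u v) :
    (∀ x, cond π σ (σ.SameCycle x)) ↔
      numCycles π + numCycles (π⁻¹ * σ) = Nat.card α + numCycles σ := by
  classical
  cases nonempty_fintype α
  letI : Fintype (Quotient (sameCycleSetoid σ)) := Fintype.ofFinite _
  have hπσ := refines_inv_mul h
  have S1 := numCycles_eq_sum σ π h
  have S2 := numCycles_eq_sum σ (π⁻¹ * σ) hπσ
  have S3 := card_eq_sum σ
  have S4 : numCycles σ = ∑ _c : Quotient (sameCycleSetoid σ), 1 := by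
    rw [numCycles_def, Nat.card_eq_fintype_card]; simp
  have hcond : ∀ x : α, cond π σ (σ.SameCycle x) ↔
      numCycles (π.subtypePerm (invariant_of_refines h x)) +
        numCycles ((π⁻¹ * σ).subtypePerm (invariant_of_refines hπσ x)) =
      Nat.card {y // σ.SameCycle x y} + 1 := by
    intro x
    rw [cond, restrictPerm_eq_subtypePerm π (invariant_of_refines h x),
      restrictPerm_eq_subtypePerm σ (invariant_self σ x)]
    have hmul : (π.subtypePerm (invariant_of_refines h x))⁻¹ *
        σ.subtypePerm (invariant_self σ x) =
        (π⁻¹ * σ).subtypePerm (invariant_of_refines hπσ x) := by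
      simp only [Perm.inv_subtypePerm, Perm.subtypePerm_mul]
    rw [hmul]
  have hbound : ∀ c : Quotient (sameCycleSetoid σ),
      numCycles (π.subtypePerm (invariant_of_refines h (Quotient.out c))) +
        numCycles ((π⁻¹ * σ).subtypePerm (invariant_of_refines hπσ (Quotient.out c))) ≤
      Nat.card {y // σ.SameCycle (Quotient.out c) y} + 1 := by
    intro c
    have hs := numCycles_add_numCycles_le
      (π.subtypePerm (invariant_of_refines h (Quotient.out c)))
      ((π⁻¹ * σ).subtypePerm (invariant_of_refines hπσ (Quotient.out c)))
    have hprod : π.subtypePerm (invariant_of_refines h (Quotient.out c)) *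
        (π⁻¹ * σ).subtypePerm (invariant_of_refines hπσ (Quotient.out c)) =
        σ.subtypePerm (invariant_self σ (Quotient.out c)) := by
      rw [Perm.subtypePerm_mul]
      exact subtypePerm_congr (by group) _ _
    rw [hprod, numCycles_subtypePerm_sameCycle] at hs
    exact hs
  constructor
  · intro hc
    rw [S1, S2, S3, S4, ← Finset.sum_add_distrib, ← Finset.sum_add_distrib]
    exact Finset.sum_congr rfl fun c _ => (hcond (Quotient.out c)).mp (hc (Quotient.out c))
  · intro hg x
    have hsum : (∑ c : Quotient (sameCycleSetoid σ),
        (numCycles (π.subtypePerm (invariant_of_refines h (Quotient.out c))) +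
          numCycles ((π⁻¹ * σ).subtypePerm (invariant_of_refines hπσ (Quotient.out c))))) =
        ∑ c : Quotient (sameCycleSetoid σ),
          (Nat.card {y // σ.SameCycle (Quotient.out c) y} + 1) := by
      rw [Finset.sum_add_distrib, Finset.sum_add_distrib, ← S1, ← S2, ← S3, ← S4]
      exact hg
    have hterm := (Finset.sum_eq_sum_iff_of_le fun c _ => hbound c).mp hsum
      (Quotient.mk (sameCycleSetoid σ) x) (Finset.mem_univ _)
    have hx0 := Quotient.exact (Quotient.out_eq (Quotient.mk (sameCycleSetoid σ) x))
    have hx : σ.SameCycle (Quotient.out (Quotient.mk (sameCycleSetoid σ) x)) x := hx0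
    have hpred : σ.SameCycle (Quotient.out (Quotient.mk (sameCycleSetoid σ) x)) =
        σ.SameCycle x :=
      funext fun y => propext ⟨fun hy => hx.symm.trans hy, fun hy => hx.trans hy⟩
    have hres := (hcond (Quotient.out (Quotient.mk (sameCycleSetoid σ) x))).mpr hterm
    rwa [hpred] at hres

/-- the relation `≤` on `S_n` is a partial order. -/
theorem stmt2 {n : ℕ} :
    (∀ π : Equiv.Perm (Fin n), le' π π) ∧
    (∀ π σ : Equiv.Perm (Fin n), le' π σ → le' σ π → π = σ) ∧
    (∀ π σ ρ : Equiv.Perm (Fin n), le' π σ → le' σ ρ → le' π ρ) := by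
  refine ⟨?_, ?_, ?_⟩
  · -- reflexivity
    intro π
    refine ⟨fun u v h => h, ?_⟩
    have hrefl : ∀ u v : Fin n, π.SameCycle u v → π.SameCycle u v := fun u v h => h
    have := (global_iff hrefl).mpr ?_
    · exact this
    · rw [inv_mul_cancel, numCycles_one, add_comm]
  · -- antisymmetry
    intro π σ h1 h2
    have hcyc : ∀ u v : Fin n, π.SameCycle u v ↔ σ.SameCycle u v :=
      fun u v => ⟨h1.1 u v, h2.1 u v⟩
    ext x
    have hπinv := invariant_of_refines h1.1 x
    have hσinv := invariant_self σ x
    have hπσinv := invariant_of_refines (refines_inv_mul h1.1) x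
    have hc := h1.2 x
    rw [restrictPerm_eq_subtypePerm π hπinv, restrictPerm_eq_subtypePerm σ hσinv] at hc
    have hmul : (π.subtypePerm hπinv)⁻¹ * σ.subtypePerm hσinv =
        (π⁻¹ * σ).subtypePerm hπσinv := by
      simp only [Perm.inv_subtypePerm, Perm.subtypePerm_mul]
    rw [hmul] at hc
    have hπ1 : numCycles (π.subtypePerm hπinv) = 1 := by
      haveI : Nonempty {y // σ.SameCycle x y} := ⟨⟨x, Perm.SameCycle.refl σ x⟩⟩
      exact numCycles_eq_one_of_forall fun y z =>
        Perm.sameCycle_subtypePerm.mpr ((hcyc _ _).mpr (y.2.symm.trans z.2))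
    rw [hπ1] at hc
    have hcard : numCycles ((π⁻¹ * σ).subtypePerm hπσinv) =
        Nat.card {y // σ.SameCycle x y} := by omega
    have hone := eq_one_of_numCycles_eq_card hcard
    have happ := Equiv.ext_iff.mp hone ⟨x, Perm.SameCycle.refl σ x⟩
    have hval : (π⁻¹ * σ) x = x := congrArg Subtype.val happ
    have : π⁻¹ (σ x) = x := hval
    have h5 := congrArg π this
    rw [show π (π⁻¹ (σ x)) = σ x from π.apply_symm_apply _] at h5
    exact congrArg Fin.val h5.symm
  · -- transitivity
    intro π σ ρ h1 h2
    have hr : ∀ u v : Fin n, π.SameCycle u v → ρ.SameCycle u v :=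
      fun u v h => h2.1 u v (h1.1 u v h)
    have g1 := (global_iff h1.1).mp h1.2
    have g2 := (global_iff h2.1).mp h2.2
    have s1 := numCycles_add_numCycles_le (π⁻¹ * σ) (σ⁻¹ * ρ)
    rw [show (π⁻¹ * σ) * (σ⁻¹ * ρ) = π⁻¹ * ρ by group] at s1
    have s2 := numCycles_add_numCycles_le π (π⁻¹ * ρ)
    rw [show π * (π⁻¹ * ρ) = ρ by group] at s2
    exact ⟨hr, (global_iff hr).mpr (by omega)⟩

end ThirdOrderFree
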